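/- Let k ≥ 7 be an integer and let G be a finite simple graph with Δ(G) ≤ k. Suppose G contains a vertex u of degree 4 whose four neighbors v, u₁, u₂, u₃ satisfy deg(v) = 3 and deg(uᵢ) ≤ 4 for i = 1, 2, 3. If G − u admits an incidence (k+3, 3)-coloring, then G admits an incidence (k+3, 3)-coloring. -/

import Mathlib

open SimpleGraph Finset


lemma card_triple_le {α : Type*} [DecidableEq α] (a b c : α) :
    ({a, b, c} : Finset α).card ≤ 3 :=
  (card_insert_le _ _).trans (Nat.succ_le_succ ((card_insert_le _ _).trans (by simp)))

lemma card_quad_le3 {α : Type*} [DecidableEq α] {a b c d : α}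
    (h : a = b ∨ a = c ∨ a = d ∨ b = c ∨ b = d ∨ c = d) :
    ({a, b, c, d} : Finset α).card ≤ 3 := by
  rcases h with h | h | h | h | h | h <;> subst h
  · exact (Finset.card_le_card (by intro x hx; simp at hx ⊢; tauto)).trans (card_triple_le a c d)
  · exact (Finset.card_le_card (by intro x hx; simp at hx ⊢; tauto)).trans (card_triple_le a b d)
  · exact (Finset.card_le_card (by intro x hx; simp at hx ⊢; tauto)).trans (card_triple_le a b c)
  · exact (Finset.card_le_card (by intro x hx; simp at hx ⊢; tauto)).trans (card_triple_le a b d)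
  · exact (Finset.card_le_card (by intro x hx; simp at hx ⊢; tauto)).trans (card_triple_le a b c)
  · exact (Finset.card_le_card (by intro x hx; simp at hx ⊢; tauto)).trans (card_triple_le a b c)

lemma exists_notin_of_card_lt {n : ℕ} (s : Finset (Fin n)) (h : s.card < n) :
    ∃ b, b ∉ s := by
  have : sᶜ.Nonempty := by
    rw [← Finset.card_pos, Finset.card_compl, Fintype.card_fin]
    omega
  obtain ⟨b, hb⟩ := this
  exact ⟨b, by simpa using hb⟩

lemma pick_lemma {n : ℕ} (hn : 9 ≤ n) (A B P : Finset (Fin n)) (hAB : Disjoint A B)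
    (hB : B.card ≤ 3) (hP : P.card ≤ 2) (hA : A.card ≤ 3) :
    ∃ b, b ∉ B ∧ b ∉ P ∧ (insert b A).card ≤ 3 ∧ (b ∈ A ∨ A ⊆ P) := by
  by_cases h : (A \ P).Nonempty
  · obtain ⟨b, hb⟩ := h
    rw [Finset.mem_sdiff] at hb
    refine ⟨b, fun hbB => (Finset.disjoint_left.mp hAB hb.1) hbB, hb.2, ?_, Or.inl hb.1⟩
    rw [Finset.insert_eq_self.mpr hb.1]; exact hA
  · have hsub : A ⊆ P := by
      rw [Finset.not_nonempty_iff_eq_empty, Finset.sdiff_eq_empty_iff_subset] at h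
      exact h
    obtain ⟨b, hb⟩ := exists_notin_of_card_lt (B ∪ P)
      ((Finset.card_union_le _ _).trans_lt (by omega))
    rw [Finset.mem_union] at hb
    push_neg at hb
    refine ⟨b, hb.1, hb.2, ?_, Or.inr hsub⟩
    exact (Finset.card_insert_le _ _).trans (by have := Finset.card_le_card hsub; omega)

lemma exists_quad {n : ℕ} (hn : 10 ≤ n) (T E0 E1 E2 E3 : Finset (Fin n))
    (hT : T.card = 3)
    (hT0 : T ⊆ E0) (hT1 : T ⊆ E1) (hT2 : T ⊆ E2) (hT3 : T ⊆ E3)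
    (h0 : E0.card ≤ 7) (h1 : E1.card ≤ 8) (h2 : E2.card ≤ 8) (h3 : E3.card ≤ 8) :
    ∃ a0 a1 a2 a3 : Fin n, a0 ∉ E0 ∧ a1 ∉ E1 ∧ a2 ∉ E2 ∧ a3 ∉ E3 ∧
      ({a0, a1, a2, a3} : Finset (Fin n)).card ≤ 3 := by
  have hcc : ∀ E : Finset (Fin n), E.card ≤ 8 → (Eᶜ).Nonempty := by
    intro E hE
    obtain ⟨b, hb⟩ := exists_notin_of_card_lt E (by omega)
    exact ⟨b, by simpa using hb⟩
  obtain ⟨c0, hc0⟩ := hcc E0 (by omega)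
  obtain ⟨c1, hc1⟩ := hcc E1 h1
  obtain ⟨c2, hc2⟩ := hcc E2 h2
  obtain ⟨c3, hc3⟩ := hcc E3 h3
  rw [Finset.mem_compl] at hc0 hc1 hc2 hc3
  by_cases h01 : (E0ᶜ ∩ E1ᶜ).Nonempty
  · obtain ⟨a, ha⟩ := h01; simp only [mem_inter, mem_compl] at ha
    exact ⟨a, a, c2, c3, ha.1, ha.2, hc2, hc3, card_quad_le3 (by tauto)⟩
  by_cases h02 : (E0ᶜ ∩ E2ᶜ).Nonempty
  · obtain ⟨a, ha⟩ := h02; simp only [mem_inter, mem_compl] at ha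
    exact ⟨a, c1, a, c3, ha.1, hc1, ha.2, hc3, card_quad_le3 (by tauto)⟩
  by_cases h03 : (E0ᶜ ∩ E3ᶜ).Nonempty
  · obtain ⟨a, ha⟩ := h03; simp only [mem_inter, mem_compl] at ha
    exact ⟨a, c1, c2, a, ha.1, hc1, hc2, ha.2, card_quad_le3 (by tauto)⟩
  by_cases h12 : (E1ᶜ ∩ E2ᶜ).Nonempty
  · obtain ⟨a, ha⟩ := h12; simp only [mem_inter, mem_compl] at ha
    exact ⟨c0, a, a, c3, hc0, ha.1, ha.2, hc3, card_quad_le3 (by tauto)⟩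
  by_cases h13 : (E1ᶜ ∩ E3ᶜ).Nonempty
  · obtain ⟨a, ha⟩ := h13; simp only [mem_inter, mem_compl] at ha
    exact ⟨c0, a, c2, a, hc0, ha.1, hc2, ha.2, card_quad_le3 (by tauto)⟩
  by_cases h23 : (E2ᶜ ∩ E3ᶜ).Nonempty
  · obtain ⟨a, ha⟩ := h23; simp only [mem_inter, mem_compl] at ha
    exact ⟨c0, c1, a, a, hc0, hc1, ha.1, ha.2, card_quad_le3 (by tauto)⟩
  exfalso
  rw [Finset.not_nonempty_iff_eq_empty, ← Finset.disjoint_iff_inter_eq_empty]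
    at h01 h02 h03 h12 h13 h23
  have dT : ∀ E : Finset (Fin n), T ⊆ E → Disjoint T Eᶜ := by
    intro E hTE
    exact Finset.disjoint_left.mpr fun x hx hxc => (Finset.mem_compl.mp hxc) (hTE hx)
  have d1 : Disjoint (T ∪ E0ᶜ) E1ᶜ := Finset.disjoint_union_left.mpr ⟨dT E1 hT1, h01⟩
  have d2 : Disjoint ((T ∪ E0ᶜ) ∪ E1ᶜ) E2ᶜ :=
    Finset.disjoint_union_left.mpr ⟨Finset.disjoint_union_left.mpr ⟨dT E2 hT2, h02⟩, h12⟩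
  have d3 : Disjoint (((T ∪ E0ᶜ) ∪ E1ᶜ) ∪ E2ᶜ) E3ᶜ :=
    Finset.disjoint_union_left.mpr ⟨Finset.disjoint_union_left.mpr
      ⟨Finset.disjoint_union_left.mpr ⟨dT E3 hT3, h03⟩, h13⟩, h23⟩
  have hkey : ((((T ∪ E0ᶜ) ∪ E1ᶜ) ∪ E2ᶜ) ∪ E3ᶜ).card =
      T.card + E0ᶜ.card + E1ᶜ.card + E2ᶜ.card + E3ᶜ.card := by
    rw [Finset.card_union_of_disjoint d3, Finset.card_union_of_disjoint d2,
      Finset.card_union_of_disjoint d1, Finset.card_union_of_disjoint (dT E0 hT0)]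
  have hle : ((((T ∪ E0ᶜ) ∪ E1ᶜ) ∪ E2ᶜ) ∪ E3ᶜ).card ≤ n := by
    simpa using Finset.card_le_univ ((((T ∪ E0ᶜ) ∪ E1ᶜ) ∪ E2ᶜ) ∪ E3ᶜ)
  have e0 : E0ᶜ.card = n - E0.card := by rw [Finset.card_compl, Fintype.card_fin]
  have e1 : E1ᶜ.card = n - E1.card := by rw [Finset.card_compl, Fintype.card_fin]
  have e2 : E2ᶜ.card = n - E2.card := by rw [Finset.card_compl, Fintype.card_fin]
  have e3 : E3ᶜ.card = n - E3.card := by rw [Finset.card_compl, Fintype.card_fin]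
  omega


/-- An incidence coloring of `G` with `n` colors, where `φ v u` is the color of the
incidence `(v, vu)` (meaningful when `G.Adj v u`): two distinct adjacent incidences
`(v, vu)` and `(w, wx)` receive distinct colors. Incidences `(v, e)` and `(w, f)` are
adjacent if `v = w`, or `e = f`, or the edge `vw` equals `e` or `f`. -/
def IsIncidenceColoring {V : Type*} (G : SimpleGraph V) {n : ℕ} (φ : V → V → Fin n) : Prop :=
  ∀ ⦃v u w x : V⦄, G.Adj v u → G.Adj w x → (v, u) ≠ (w, x) →
    (v = w ∨ s(v, u) = s(w, x) ∨ s(v, w) = s(v, u) ∨ s(v, w) = s(w, x)) →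
    φ v u ≠ φ w x

/-- `G` admits an incidence `(n, ℓ)`-coloring: an incidence coloring with `n` colors such
that for every vertex `v`, at most `ℓ` distinct colors appear on the incidences of the
form `(u, uv)` where `u` ranges over the neighbors of `v`. -/
def HasIncidenceColoring {V : Type*} (G : SimpleGraph V) (n ℓ : ℕ) : Prop :=
  ∃ φ : V → V → Fin n, IsIncidenceColoring G φ ∧
    ∀ v : V, ({c : Fin n | ∃ u : V, G.Adj u v ∧ φ u v = c}).ncard ≤ ℓ

/-- The incidence chromatic number: the least `n` such that `G` admits an incidence
`n`-coloring. -/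
noncomputable def incChromaticNumber {V : Type*} (G : SimpleGraph V) : ℕ :=
  sInf {n : ℕ | ∃ φ : V → V → Fin n, IsIncidenceColoring G φ}

/-- `mad(G) < q`: every nonempty subgraph `H` of `G` satisfies `2|E(H)| < q·|V(H)|`. -/
def MadLT {V : Type*} (G : SimpleGraph V) (q : ℝ) : Prop :=
  ∀ H : G.Subgraph, H.verts.Nonempty →
    (2 * H.edgeSet.ncard : ℝ) < q * H.verts.ncard

lemma extension_tail {V : Type*} [Fintype V] [DecidableEq V] (G : SimpleGraph V)
    [DecidableRel G.Adj] (n : ℕ)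
    (u v u₁ u₂ u₃ : V) (hv : G.Adj u v) (h1 : G.Adj u u₁) (h2 : G.Adj u u₂) (h3 : G.Adj u u₃)
    (hv1 : v ≠ u₁) (hv2 : v ≠ u₂) (hv3 : v ≠ u₃)
    (h12 : u₁ ≠ u₂) (h13 : u₁ ≠ u₃) (h23 : u₂ ≠ u₃)
    (hmemN : ∀ x, G.Adj x u → x = v ∨ x = u₁ ∨ x = u₂ ∨ x = u₃)
    (φ₀ : V → V → Fin n) (As Bs : V → Finset (Fin n))
    (hmemB : ∀ w c, c ∈ Bs w ↔ ∃ y, y ≠ u ∧ G.Adj w y ∧ φ₀ w y = c)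
    (hmemA : ∀ w c, c ∈ As w ↔ ∃ x, x ≠ u ∧ G.Adj w x ∧ φ₀ x w = c)
    (hcardA : ∀ w, w ≠ u → (As w).card ≤ 3)
    (hcardAv : (As v).card ≤ 2)
    (hold : ∀ p q r t : V, p ≠ u → q ≠ u → r ≠ u → t ≠ u → G.Adj p q → G.Adj r t →
      (p, q) ≠ (r, t) → (p = r ∨ q = r ∨ p = t) → φ₀ p q ≠ φ₀ r t)
    (b₁ b₂ b₃ bv a0 a1 a2 a3 : Fin n)
    (hb₁B : b₁ ∉ Bs u₁) (hb₂B : b₂ ∉ Bs u₂) (hb₃B : b₃ ∉ Bs u₃)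
    (hb₁ins : (insert b₁ (As u₁)).card ≤ 3)
    (hb₂ins : (insert b₂ (As u₂)).card ≤ 3)
    (hb₃ins : (insert b₃ (As u₃)).card ≤ 3)
    (hb12 : b₁ ≠ b₂) (hb13 : b₁ ≠ b₃) (hb23 : b₂ ≠ b₃)
    (ha0 : a0 ∉ Bs v ∪ (As v ∪ {b₁, b₂, b₃}))
    (ha1 : a1 ∉ Bs u₁ ∪ (As u₁ ∪ {b₁, b₂, b₃}))
    (ha2 : a2 ∉ Bs u₂ ∪ (As u₂ ∪ {b₁, b₂, b₃}))
    (ha3 : a3 ∉ Bs u₃ ∪ (As u₃ ∪ {b₁, b₂, b₃}))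
    (hquad : ({a0, a1, a2, a3} : Finset (Fin n)).card ≤ 3)
    (hbv : bv ∉ Bs v ∪ ({b₁, b₂, b₃} ∪ {a0, a1, a2, a3})) :
    HasIncidenceColoring G n 3 := by
  classical
  have hAeq : ∀ w, As w = ((G.neighborFinset w).erase u).image (fun x => φ₀ x w) := by
    intro w
    ext c
    rw [hmemA]
    simp only [Finset.mem_image, Finset.mem_erase, mem_neighborFinset]
    constructor
    · rintro ⟨x, hx, hadj, hc⟩; exact ⟨x, ⟨hx, hadj⟩, hc⟩
    · rintro ⟨x, ⟨hx, hadj⟩, hc⟩; exact ⟨x, hx, hadj, hc⟩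
  have hvu : v ≠ u := hv.ne'
  have h1u : u₁ ≠ u := h1.ne'
  have h2u : u₂ ≠ u := h2.ne'
  have h3u : u₃ ≠ u := h3.ne'
  simp only [Finset.mem_union, Finset.mem_insert, Finset.mem_singleton, not_or] at ha0 ha1 ha2 ha3 hbv
  obtain ⟨hbvB, ⟨hbvb1, hbvb2, hbvb3⟩, hbva0, hbva1, hbva2, hbva3⟩ := hbv
  set out : V → Fin n :=
    fun y => if y = v then bv else if y = u₁ then b₁ else if y = u₂ then b₂ else b₃ with houtdef
  set inc : V → Fin n :=
    fun x => if x = v then a0 else if x = u₁ then a1 else if x = u₂ then a2 else a3 with hincdef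
  set φ : V → V → Fin n :=
    fun x y => if x = u then out y else if y = u then inc x else φ₀ x y with hφdef
  have hov : out v = bv := by simp [houtdef]
  have ho1 : out u₁ = b₁ := by simp [houtdef, Ne.symm hv1]
  have ho2 : out u₂ = b₂ := by simp [houtdef, Ne.symm hv2, Ne.symm h12]
  have ho3 : out u₃ = b₃ := by simp [houtdef, Ne.symm hv3, Ne.symm h13, Ne.symm h23]
  have hiv : inc v = a0 := by simp [hincdef]
  have hi1 : inc u₁ = a1 := by simp [hincdef, Ne.symm hv1]
  have hi2 : inc u₂ = a2 := by simp [hincdef, Ne.symm hv2, Ne.symm h12]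
  have hi3 : inc u₃ = a3 := by simp [hincdef, Ne.symm hv3, Ne.symm h13, Ne.symm h23]
  have hφu : ∀ y, φ u y = out y := by intro y; simp [hφdef]
  have hφxu : ∀ x, x ≠ u → φ x u = inc x := by intro x hx; simp [hφdef, hx]
  have hφold : ∀ x y, x ≠ u → y ≠ u → φ x y = φ₀ x y := by
    intro x y hx hy; simp [hφdef, hx, hy]
  -- key facts
  have houtB : ∀ w, G.Adj u w → out w ∉ Bs w := by
    intro w hw
    rcases hmemN w hw.symm with rfl | rfl | rfl | rfl
    · rw [hov]; exact hbvB
    · rw [ho1]; exact hb₁B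
    · rw [ho2]; exact hb₂B
    · rw [ho3]; exact hb₃B
  have houtins : ∀ w, G.Adj u w → (insert (out w) (As w)).card ≤ 3 := by
    intro w hw
    rcases hmemN w hw.symm with rfl | rfl | rfl | rfl
    · exact (Finset.card_insert_le _ _).trans (by omega)
    · rw [ho1]; exact hb₁ins
    · rw [ho2]; exact hb₂ins
    · rw [ho3]; exact hb₃ins
  have houtne : ∀ w w', G.Adj u w → G.Adj u w' → w ≠ w' → out w ≠ out w' := by
    intro w w' hw hw' hne
    rcases hmemN w hw.symm with rfl | rfl | rfl | rfl <;>
      rcases hmemN w' hw'.symm with rfl | rfl | rfl | rfl <;>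
      simp only [hov, ho1, ho2, ho3] <;>
      first
        | exact absurd rfl hne
        | exact hbvb1 | exact hbvb2 | exact hbvb3
        | exact Ne.symm hbvb1 | exact Ne.symm hbvb2 | exact Ne.symm hbvb3
        | exact hb12 | exact hb13 | exact hb23
        | exact hb12.symm | exact hb13.symm | exact hb23.symm
  have hincB : ∀ w, G.Adj u w → inc w ∉ Bs w := by
    intro w hw
    rcases hmemN w hw.symm with rfl | rfl | rfl | rfl
    · rw [hiv]; exact ha0.1
    · rw [hi1]; exact ha1.1
    · rw [hi2]; exact ha2.1
    · rw [hi3]; exact ha3.1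
  have hincA : ∀ w, G.Adj u w → inc w ∉ As w := by
    intro w hw
    rcases hmemN w hw.symm with rfl | rfl | rfl | rfl
    · rw [hiv]; exact ha0.2.1
    · rw [hi1]; exact ha1.2.1
    · rw [hi2]; exact ha2.2.1
    · rw [hi3]; exact ha3.2.1
  have houtinc : ∀ w w', G.Adj u w → G.Adj u w' → out w ≠ inc w' := by
    intro w w' hw hw'
    rcases hmemN w' hw'.symm with rfl | rfl | rfl | rfl <;>
      rcases hmemN w hw.symm with rfl | rfl | rfl | rfl <;>
      simp only [hov, ho1, ho2, ho3, hiv, hi1, hi2, hi3] <;>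
      first
        | exact hbva0 | exact hbva1 | exact hbva2 | exact hbva3
        | exact fun h => ha0.2.2.1 h.symm
        | exact fun h => ha0.2.2.2.1 h.symm
        | exact fun h => ha0.2.2.2.2 h.symm
        | exact fun h => ha1.2.2.1 h.symm
        | exact fun h => ha1.2.2.2.1 h.symm
        | exact fun h => ha1.2.2.2.2 h.symm
        | exact fun h => ha2.2.2.1 h.symm
        | exact fun h => ha2.2.2.2.1 h.symm
        | exact fun h => ha2.2.2.2.2 h.symm
        | exact fun h => ha3.2.2.1 h.symm
        | exact fun h => ha3.2.2.2.1 h.symm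
        | exact fun h => ha3.2.2.2.2 h.symm
  refine ⟨φ, ?_, ?_⟩
  · intro p q r t hpq hrt hne hdisj
    have hcond : p = r ∨ q = r ∨ p = t := by
      rcases hdisj with h | h | h | h
      · exact Or.inl h
      · rw [Sym2.eq_iff] at h
        rcases h with ⟨h1', h2'⟩ | ⟨h1', h2'⟩
        · exact absurd (by rw [h1', h2']) hne
        · exact Or.inr (Or.inl h2')
      · rw [Sym2.eq_iff] at h
        rcases h with ⟨-, h2'⟩ | ⟨h1', -⟩
        · exact Or.inr (Or.inl h2'.symm)
        · exact absurd h1' hpq.ne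
      · rw [Sym2.eq_iff] at h
        rcases h with ⟨-, h2'⟩ | ⟨h1', -⟩
        · exact absurd h2' hrt.ne
        · exact Or.inr (Or.inr h1')
    by_cases hp : p = u
    · have hq : q ≠ u := fun h => hpq.ne (hp.trans h.symm)
      have hadjq : G.Adj u q := hp ▸ hpq
      by_cases hr : r = u
      · have hadjt : G.Adj u t := hr ▸ hrt
        rw [hp, hr, hφu q, hφu t]
        refine houtne q t hadjq hadjt fun h => hne ?_
        rw [hp, hr, h]
      · by_cases ht : t = u
        · have hadjr : G.Adj u r := ht ▸ hrt.symm
          rw [hp, ht, hφu q, hφxu r hr]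
          exact houtinc q r hadjq hadjr
        · have hqr : q = r := by
            rcases hcond with h | h | h
            · exact absurd (h.symm.trans hp) hr
            · exact h
            · exact absurd (h.symm.trans hp) ht
          rw [hp, hφu q, hφold r t hr ht]
          intro h'
          apply houtB q hadjq
          rw [h']
          exact (hmemB q (φ₀ r t)).2 ⟨t, ht, by rw [hqr]; exact hrt, by rw [hqr]⟩
    · by_cases hq : q = u
      · have hadjp : G.Adj u p := hq ▸ hpq.symm
        by_cases hr : r = u
        · have hadjt : G.Adj u t := hr ▸ hrt
          rw [hq, hr, hφxu p hp, hφu t]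
          exact (houtinc t p hadjt hadjp).symm
        · by_cases ht : t = u
          · exfalso
            rcases hcond with h | h | h
            · exact hne (by rw [h, hq, ht])
            · exact hr (h.symm.trans hq)
            · exact hp (h.trans ht)
          · rw [hq, hφxu p hp, hφold r t hr ht]
            rcases hcond with h | h | h
            · intro h'
              apply hincB p hadjp
              rw [h']
              exact (hmemB p (φ₀ r t)).2 ⟨t, ht, by rw [h]; exact hrt, by rw [h]⟩
            · exact absurd (h.symm.trans hq) hr
            · intro h'
              apply hincA p hadjp
              rw [h']
              exact (hmemA p (φ₀ r t)).2 ⟨r, hr, by rw [h]; exact hrt.symm, by rw [h]⟩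
      · by_cases hr : r = u
        · have hadjt : G.Adj u t := hr ▸ hrt
          have hpt : p = t := by
            rcases hcond with h | h | h
            · exact absurd (h.trans hr) hp
            · exact absurd (h.trans hr) hq
            · exact h
          rw [hr, hφold p q hp hq, hφu t]
          intro h'
          apply houtB t hadjt
          rw [← h']
          exact (hmemB t (φ₀ p q)).2 ⟨q, hq, by rw [← hpt]; exact hpq, by rw [← hpt]⟩
        · by_cases ht : t = u
          · have hadjr : G.Adj u r := ht ▸ hrt.symm
            rw [ht, hφold p q hp hq, hφxu r hr]
            rcases hcond with h | h | h
            · intro h'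
              apply hincB r hadjr
              rw [← h']
              exact (hmemB r (φ₀ p q)).2 ⟨q, hq, by rw [← h]; exact hpq, by rw [← h]⟩
            · intro h'
              apply hincA r hadjr
              rw [← h']
              exact (hmemA r (φ₀ p q)).2 ⟨p, hp, by rw [← h]; exact hpq.symm, by rw [← h]⟩
            · exact absurd (h.trans ht) hp
          · rw [hφold p q hp hq, hφold r t hr ht]
            exact hold p q r t hp hq hr ht hpq hrt hne hcond
  · intro y
    have hset : {c : Fin n | ∃ x, G.Adj x y ∧ φ x y = c} =
        ↑((G.neighborFinset y).image (fun x => φ x y)) := by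
      ext c
      simp only [Set.mem_setOf_eq, Finset.coe_image, Set.mem_image, Finset.mem_coe,
        mem_neighborFinset]
      constructor
      · rintro ⟨x, hx, rfl⟩; exact ⟨x, hx.symm, rfl⟩
      · rintro ⟨x, hx, rfl⟩; exact ⟨x, hx.symm, rfl⟩
    rw [hset, Set.ncard_coe_finset]
    by_cases hy : y = u
    · rw [hy]
      refine (Finset.card_le_card ?_).trans hquad
      intro c hc
      rw [Finset.mem_image] at hc
      obtain ⟨x, hx, rfl⟩ := hc
      rw [mem_neighborFinset] at hx
      rcases hmemN x hx.symm with rfl | rfl | rfl | rfl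
      · rw [hφxu x hvu, hiv]; simp
      · rw [hφxu x h1u, hi1]; simp
      · rw [hφxu x h2u, hi2]; simp
      · rw [hφxu x h3u, hi3]; simp
    · by_cases hadj : G.Adj u y
      · have hymem : u ∈ G.neighborFinset y := by rw [mem_neighborFinset]; exact hadj.symm
        rw [← Finset.insert_erase hymem, Finset.image_insert]
        have himg : ((G.neighborFinset y).erase u).image (fun x => φ x y) =
            ((G.neighborFinset y).erase u).image (fun x => φ₀ x y) :=
          Finset.image_congr fun x hx => hφold x y (Finset.mem_erase.mp hx).1 hy
        rw [himg, ← hAeq y, hφu y]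
        exact houtins y hadj
      · have hunm : u ∉ G.neighborFinset y := by
          rw [mem_neighborFinset]
          exact fun h => hadj h.symm
        rw [← Finset.erase_eq_of_notMem hunm]
        have himg : ((G.neighborFinset y).erase u).image (fun x => φ x y) =
            ((G.neighborFinset y).erase u).image (fun x => φ₀ x y) :=
          Finset.image_congr fun x hx => hφold x y (Finset.mem_erase.mp hx).1 hy
        rw [himg, ← hAeq y]
        exact hcardA y hy



set_option maxHeartbeats 2000000 in
theorem incidence_extend_four_vertex_small_neighbors {V : Type*} [Fintype V] (G : SimpleGraph V)
    [DecidableRel G.Adj] (k : ℕ) (hk : 7 ≤ k) (hΔ : G.maxDegree ≤ k)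
    (u v u₁ u₂ u₃ : V) (hv : G.Adj u v) (h1 : G.Adj u u₁) (h2 : G.Adj u u₂) (h3 : G.Adj u u₃)
    (hv1 : v ≠ u₁) (hv2 : v ≠ u₂) (hv3 : v ≠ u₃)
    (h12 : u₁ ≠ u₂) (h13 : u₁ ≠ u₃) (h23 : u₂ ≠ u₃)
    (hdu : G.degree u = 4) (hdv : G.degree v = 3)
    (hd1 : G.degree u₁ ≤ 4) (hd2 : G.degree u₂ ≤ 4) (hd3 : G.degree u₃ ≤ 4)
    (hcol : HasIncidenceColoring (G.induce ({u}ᶜ : Set V)) (k + 3) 3) :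
    HasIncidenceColoring G (k + 3) 3 := by
  classical
  obtain ⟨φ', hφcol, hφℓ⟩ := hcol
  have hvu : v ≠ u := hv.ne'
  have h1u : u₁ ≠ u := h1.ne'
  have h2u : u₂ ≠ u := h2.ne'
  have h3u : u₃ ≠ u := h3.ne'
  -- neighbors of u
  have hNu : G.neighborFinset u = {v, u₁, u₂, u₃} := by
    refine (Finset.eq_of_subset_of_card_le ?_ ?_).symm
    · intro x hx
      simp only [Finset.mem_insert, Finset.mem_singleton] at hx
      rcases hx with rfl | rfl | rfl | rfl <;> simp [mem_neighborFinset, hv, h1, h2, h3]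
    · have hc4 : ({v, u₁, u₂, u₃} : Finset V).card = 4 := by
        rw [Finset.card_insert_of_notMem (by simp [hv1, hv2, hv3]),
          Finset.card_insert_of_notMem (by simp [h12, h13]),
          Finset.card_insert_of_notMem (by simp [h23]), Finset.card_singleton]
      rw [hc4, card_neighborFinset_eq_degree, hdu]
  have hmemN : ∀ x, G.Adj x u → x = v ∨ x = u₁ ∨ x = u₂ ∨ x = u₃ := by
    intro x hx
    have : x ∈ G.neighborFinset u := by simp [mem_neighborFinset, hx.symm]
    rw [hNu] at this
    simpa using this
  -- the extended-by-junk coloring of G - u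
  obtain ⟨φ₀, hφ₀eq⟩ : ∃ f : V → V → Fin (k + 3),
      ∀ (x y : V) (hx : x ≠ u) (hy : y ≠ u), f x y = φ' ⟨x, hx⟩ ⟨y, hy⟩ :=
    ⟨fun x y => if h : x ≠ u ∧ y ≠ u then φ' ⟨x, h.1⟩ ⟨y, h.2⟩ else 0,
      fun x y hx hy => by simp [hx, hy]⟩
  -- old-old transfer
  have hold : ∀ p q r t : V, p ≠ u → q ≠ u → r ≠ u → t ≠ u → G.Adj p q → G.Adj r t →
      (p, q) ≠ (r, t) → (p = r ∨ q = r ∨ p = t) → φ₀ p q ≠ φ₀ r t := by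
    intro p q r t hp hq hr ht hpq hrt hne hc
    rw [hφ₀eq p q hp hq, hφ₀eq r t hr ht]
    refine hφcol (by simpa using hpq) (by simpa using hrt) ?_ ?_
    · intro hcontra
      rw [Prod.mk.injEq] at hcontra
      exact hne (by rw [show p = r from congrArg Subtype.val hcontra.1, show q = t from congrArg Subtype.val hcontra.2])
    · rcases hc with rfl | rfl | rfl
      · exact Or.inl rfl
      · exact Or.inr (Or.inr (Or.inl rfl))
      · exact Or.inr (Or.inr (Or.inr (Sym2.eq_swap)))
  -- incoming / outgoing color sets in G - u
  obtain ⟨Bs, hmemB, hcardB⟩ : ∃ Bf : V → Finset (Fin (k + 3)),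
      (∀ w c, c ∈ Bf w ↔ ∃ y, y ≠ u ∧ G.Adj w y ∧ φ₀ w y = c) ∧
      (∀ w, G.Adj u w → (Bf w).card ≤ G.degree w - 1) := by
    refine ⟨fun w => ((G.neighborFinset w).erase u).image (fun y => φ₀ w y), ?_, ?_⟩
    · intro w c
      simp only [Finset.mem_image, Finset.mem_erase, mem_neighborFinset]
      tauto
    · intro w hw
      refine Finset.card_image_le.trans ?_
      rw [Finset.card_erase_of_mem (by simpa [mem_neighborFinset] using hw.symm),
        card_neighborFinset_eq_degree]
  obtain ⟨As, hmemA, hcardA', hAeq⟩ : ∃ Af : V → Finset (Fin (k + 3)),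
      (∀ w c, c ∈ Af w ↔ ∃ x, x ≠ u ∧ G.Adj w x ∧ φ₀ x w = c) ∧
      (∀ w, G.Adj u w → (Af w).card ≤ G.degree w - 1) ∧
      (∀ w, Af w = ((G.neighborFinset w).erase u).image (fun x => φ₀ x w)) := by
    refine ⟨fun w => ((G.neighborFinset w).erase u).image (fun x => φ₀ x w), ?_, ?_, fun w => rfl⟩
    · intro w c
      simp only [Finset.mem_image, Finset.mem_erase, mem_neighborFinset]
      tauto
    · intro w hw
      refine Finset.card_image_le.trans ?_
      rw [Finset.card_erase_of_mem (by simpa [mem_neighborFinset] using hw.symm),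
        card_neighborFinset_eq_degree]
  have hABdisj : ∀ w, w ≠ u → Disjoint (As w) (Bs w) := by
    intro w hw
    rw [Finset.disjoint_left]
    intro c hcA hcB
    obtain ⟨x, hxu, hwx, hxc⟩ := (hmemA w c).1 hcA
    obtain ⟨y, hyu, hwy, hyc⟩ := (hmemB w c).1 hcB
    refine hold x w w y hxu hw hw hyu hwx.symm hwy ?_ (Or.inr (Or.inl rfl)) (hxc.trans hyc.symm)
    intro hcontra
    rw [Prod.mk.injEq] at hcontra
    exact hwx.ne' hcontra.1
  have hcardA : ∀ w, w ≠ u → (As w).card ≤ 3 := by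
    intro w hw
    have h3 := hφℓ ⟨w, hw⟩
    have hset : (↑(As w) : Set (Fin (k + 3))) =
        {c : Fin (k + 3) | ∃ x, (G.induce ({u}ᶜ : Set V)).Adj x ⟨w, hw⟩ ∧ φ' x ⟨w, hw⟩ = c} := by
      ext c
      simp only [Finset.mem_coe, Set.mem_setOf_eq, hmemA]
      constructor
      · rintro ⟨x, hx, hadj, rfl⟩
        exact ⟨⟨x, hx⟩, by simpa using hadj.symm, (hφ₀eq x w hx hw).symm⟩
      · rintro ⟨⟨x, hx⟩, hadj, rfl⟩
        have hxw : G.Adj x w := by simpa using hadj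
        exact ⟨x, hx, hxw.symm, hφ₀eq x w hx hw⟩
    rw [← Set.ncard_coe_finset, hset]
    exact h3
  have hcardAv : (As v).card ≤ 2 := by
    have := hcardA' v hv
    omega
  -- choose outgoing colors b₁ b₂ b₃ for (u, u·i)
  have hcA1 : (As u₁).card ≤ 3 := hcardA u₁ h1u
  have hcA2 : (As u₂).card ≤ 3 := hcardA u₂ h2u
  have hcA3 : (As u₃).card ≤ 3 := hcardA u₃ h3u
  have hcB1 : (Bs u₁).card ≤ 3 := by have := hcardB u₁ h1; omega
  have hcB2 : (Bs u₂).card ≤ 3 := by have := hcardB u₂ h2; omega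
  have hcB3 : (Bs u₃).card ≤ 3 := by have := hcardB u₃ h3; omega
  have hcBv : (Bs v).card ≤ 2 := by have := hcardB v hv; omega
  have hn9 : 9 ≤ k + 3 := by omega
  obtain ⟨b₁, hb₁B, hb₁P, hb₁ins, hb₁mem⟩ :=
    pick_lemma hn9 (As u₁) (Bs u₁) ∅ (hABdisj u₁ h1u) hcB1 (by simp) hcA1
  obtain ⟨b₂, hb₂B, hb₂P, hb₂ins, hb₂mem⟩ :=
    pick_lemma hn9 (As u₂) (Bs u₂) {b₁} (hABdisj u₂ h2u) hcB2 (by simp) hcA2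
  obtain ⟨b₃, hb₃B, hb₃P, hb₃ins, hb₃mem⟩ :=
    pick_lemma hn9 (As u₃) (Bs u₃) {b₁, b₂} (hABdisj u₃ h3u) hcB3
      ((Finset.card_insert_le _ _).trans (by simp)) hcA3
  have hb12 : b₁ ≠ b₂ := fun h => hb₂P (by simp [h])
  have hb13 : b₁ ≠ b₃ := fun h => hb₃P (by simp [h])
  have hb23 : b₂ ≠ b₃ := fun h => hb₃P (by simp [h])
  have hTcard : ({b₁, b₂, b₃} : Finset (Fin (k + 3))).card = 3 := by
    rw [Finset.card_insert_of_notMem (by simp [hb12, hb13]),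
      Finset.card_insert_of_notMem (by simp [hb23]), Finset.card_singleton]
  -- cards of A ∪ T
  have hATcard : ∀ (A : Finset (Fin (k + 3))) b P, A.card ≤ 3 → (b ∈ A ∨ A ⊆ P) →
      P.card ≤ 2 → b ∈ ({b₁, b₂, b₃} : Finset (Fin (k + 3))) →
      (A ∪ {b₁, b₂, b₃}).card ≤ 5 := by
    intro A b P hA hmem hPT hbT
    rcases hmem with hbA | hAP
    · have hsub : A ∪ {b₁, b₂, b₃} ⊆ A ∪ ({b₁, b₂, b₃} : Finset (Fin (k + 3))).erase b := by
        intro x hx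
        rw [Finset.mem_union] at hx ⊢
        rcases hx with hx | hx
        · exact Or.inl hx
        · by_cases hxb : x = b
          · exact Or.inl (hxb ▸ hbA)
          · exact Or.inr (Finset.mem_erase.mpr ⟨hxb, hx⟩)
      refine (Finset.card_le_card hsub).trans ?_
      refine (Finset.card_union_le _ _).trans ?_
      rw [Finset.card_erase_of_mem hbT, hTcard]
      omega
    · refine (Finset.card_union_le _ _).trans ?_
      have := (Finset.card_le_card hAP).trans hPT
      rw [hTcard]
      omega
  have hAT1 : (As u₁ ∪ {b₁, b₂, b₃}).card ≤ 5 :=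
    hATcard (As u₁) b₁ ∅ hcA1 hb₁mem (by simp) (by simp)
  have hAT2 : (As u₂ ∪ {b₁, b₂, b₃}).card ≤ 5 :=
    hATcard (As u₂) b₂ {b₁} hcA2 hb₂mem (by simp) (by simp)
  have hAT3 : (As u₃ ∪ {b₁, b₂, b₃}).card ≤ 5 :=
    hATcard (As u₃) b₃ {b₁, b₂} hcA3 hb₃mem
      ((Finset.card_insert_le _ _).trans (by simp)) (by simp)
  -- the four forbidden sets and the incoming colors
  obtain ⟨a0, a1, a2, a3, ha0, ha1, ha2, ha3, hquad⟩ :=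
    exists_quad (by omega) {b₁, b₂, b₃}
      (Bs v ∪ (As v ∪ {b₁, b₂, b₃})) (Bs u₁ ∪ (As u₁ ∪ {b₁, b₂, b₃}))
      (Bs u₂ ∪ (As u₂ ∪ {b₁, b₂, b₃})) (Bs u₃ ∪ (As u₃ ∪ {b₁, b₂, b₃}))
      hTcard
      (Finset.subset_union_right.trans Finset.subset_union_right)
      (Finset.subset_union_right.trans Finset.subset_union_right)
      (Finset.subset_union_right.trans Finset.subset_union_right)
      (Finset.subset_union_right.trans Finset.subset_union_right)
      ((Finset.card_union_le _ _).trans (by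
        have := (Finset.card_union_le (As v) ({b₁, b₂, b₃} : Finset (Fin (k + 3))))
        rw [hTcard] at this
        omega))
      ((Finset.card_union_le _ _).trans (by omega))
      ((Finset.card_union_le _ _).trans (by omega))
      ((Finset.card_union_le _ _).trans (by omega))
  -- choose bv
  obtain ⟨bv, hbv⟩ := exists_notin_of_card_lt
    (Bs v ∪ ({b₁, b₂, b₃} ∪ {a0, a1, a2, a3}))
    ((Finset.card_union_le _ _).trans_lt (by
      have h4 := card_quad_le3 (a := a0) (b := a1) (c := a2) (d := a3)
      have hu := Finset.card_union_le ({b₁, b₂, b₃} : Finset (Fin (k+3))) {a0, a1, a2, a3}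
      have hq : ({a0, a1, a2, a3} : Finset (Fin (k+3))).card ≤ 4 :=
        (Finset.card_insert_le _ _).trans (Nat.succ_le_succ (card_triple_le _ _ _))
      rw [hTcard] at hu
      omega))
  haveI : DecidableEq V := Classical.decEq V
  exact extension_tail G (k + 3) u v u₁ u₂ u₃ hv h1 h2 h3 hv1 hv2 hv3 h12 h13 h23
    hmemN φ₀ As Bs hmemB hmemA hcardA hcardAv hold
    b₁ b₂ b₃ bv a0 a1 a2 a3 hb₁B hb₂B hb₃B hb₁ins hb₂ins hb₃ins hb12 hb13 hb23
    ha0 ha1 ha2 ha3 hquad hbv
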